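/- The map ε ↦ z*(ε) is componentwise non-decreasing and right-continuous on [0,1). Consequently, its derivative (z*)'(ε) exists for Lebesgue-almost every ε, and z*(ε) − z* ≥ ∫₀^ε (z*)'(ξ) dξ componentwise for every ε ∈ [0,1). -/

import Mathlib

open MeasureTheory Filter Set Topology

open Classical in
/-- Probability that a Poisson(q) random variable equals `k`. -/
noncomputable def poisProb (q : ℝ) (k : ℕ) : ℝ := Real.exp (-q) * q ^ k / (Nat.factorial k : ℝ)

open Classical in
/-- `psiMulti q l = P(∑_{s=1}^R s · Q_s ≥ l)` for independent `Q_s ~ Poi(q s)`;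
in particular it equals `1` for `l ≤ 0` and `0` for `l = ∞`. -/
noncomputable def psiMulti {R : ℕ} (q : Fin R → ℝ) (l : WithTop ℤ) : ℝ :=
  ∑' k : Fin R → ℕ,
    if l ≤ ((((∑ s : Fin R, ((s : ℕ) + 1) * k s) : ℕ) : ℤ) : WithTop ℤ) then
      ∏ s, poisProb (q s) (k s)
    else 0

/-- Embedding of `ℕ ∪ {∞}` into `ℤ ∪ {∞}`. -/
noncomputable def natCastTop (c : WithTop ℕ) : WithTop ℤ := WithTop.map (fun n : ℕ => (n : ℤ)) c

/-- The function `f^{r,α,β}(z) = E[W^{+,r,α} ψ(∑_γ W^{-,1,γ} z^{1,β,γ}, …, ∑_γ W^{-,R,γ} z^{R,β,γ}; C)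
1{A=β}] − z^{r,α,β}` (with `v = (r,α,β)`). -/
noncomputable def fV {Ω : Type*} [MeasureSpace Ω] {R T : ℕ}
    (Wm Wp : Ω → Fin R → Fin T → ℝ) (C : Ω → WithTop ℕ) (A : Ω → Fin T)
    (v : Fin R × Fin T × Fin T) (z : Fin R × Fin T × Fin T → ℝ) : ℝ :=
  (∫ ω, if A ω = v.2.2 then
      Wp ω v.1 v.2.1 *
        psiMulti (fun s => ∑ γ, Wm ω s γ * z (s, v.2.2, γ)) (natCastTop (C ω))
    else 0) - z v

/-- The function `g(z) = ∑_β E[S ψ(…; C) 1{A=β}]`. -/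
noncomputable def gV {Ω : Type*} [MeasureSpace Ω] {R T : ℕ}
    (Wm : Ω → Fin R → Fin T → ℝ) (S : Ω → ℝ) (C : Ω → WithTop ℕ) (A : Ω → Fin T)
    (z : Fin R × Fin T × Fin T → ℝ) : ℝ :=
  ∑ β, ∫ ω, if A ω = β then
      S ω * psiMulti (fun s => ∑ γ, Wm ω s γ * z (s, β, γ)) (natCastTop (C ω))
    else 0

/-- The nonnegative orthant `[0,∞)^V`. -/
def nonnegV (R T : ℕ) : Set ((Fin R × Fin T × Fin T) → ℝ) := {z | ∀ v, 0 ≤ z v}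

/-- The set `P = ∩_{(r,α,β) ∈ V} {z ∈ [0,∞)^V : f^{r,α,β}(z) ≥ 0}`. -/
noncomputable def PsetV {Ω : Type*} [MeasureSpace Ω] {R T : ℕ}
    (Wm Wp : Ω → Fin R → Fin T → ℝ) (C : Ω → WithTop ℕ) (A : Ω → Fin T) :
    Set ((Fin R × Fin T × Fin T) → ℝ) :=
  {z | z ∈ nonnegV R T ∧ ∀ v, 0 ≤ fV Wm Wp C A v z}

/-- `P₀`, the largest connected subset of `P` containing `0`. -/
noncomputable def P0V {Ω : Type*} [MeasureSpace Ω] {R T : ℕ}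
    (Wm Wp : Ω → Fin R → Fin T → ℝ) (C : Ω → WithTop ℕ) (A : Ω → Fin T) :
    Set ((Fin R × Fin T × Fin T) → ℝ) :=
  connectedComponentIn (PsetV Wm Wp C A) 0

/-- `z*`, defined by `(z*)^{r,α,β} = sup_{z ∈ P₀} z^{r,α,β}`. -/
noncomputable def zStarV {Ω : Type*} [MeasureSpace Ω] {R T : ℕ}
    (Wm Wp : Ω → Fin R → Fin T → ℝ) (C : Ω → WithTop ℕ) (A : Ω → Fin T) :
    (Fin R × Fin T × Fin T) → ℝ :=
  fun v => sSup ((fun z => z v) '' P0V Wm Wp C A)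

/-- `ζ^{r,α,β} = E[W^{+,r,α} 1{A=β}]`. -/
noncomputable def zetaV {Ω : Type*} [MeasureSpace Ω] {R T : ℕ}
    (Wp : Ω → Fin R → Fin T → ℝ) (A : Ω → Fin T) (v : Fin R × Fin T × Fin T) : ℝ :=
  ∫ ω, if A ω = v.2.2 then Wp ω v.1 v.2.1 else 0

/-- The shocked function `f_ε^{r,α,β}(z) = (1-ε) f^{r,α,β}(z) + ε (ζ^{r,α,β} - z^{r,α,β})`. -/
noncomputable def fVeps {Ω : Type*} [MeasureSpace Ω] {R T : ℕ}
    (Wm Wp : Ω → Fin R → Fin T → ℝ) (C : Ω → WithTop ℕ) (A : Ω → Fin T) (ε : ℝ)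
    (v : Fin R × Fin T × Fin T) (z : Fin R × Fin T × Fin T → ℝ) : ℝ :=
  (1 - ε) * fV Wm Wp C A v z + ε * (zetaV Wp A v - z v)

/-- `P(ε) = ∩_{(r,α,β) ∈ V} {z ∈ [0,∞)^V : f_ε^{r,α,β}(z) ≥ 0}`. -/
noncomputable def PsetVeps {Ω : Type*} [MeasureSpace Ω] {R T : ℕ}
    (Wm Wp : Ω → Fin R → Fin T → ℝ) (C : Ω → WithTop ℕ) (A : Ω → Fin T) (ε : ℝ) :
    Set ((Fin R × Fin T × Fin T) → ℝ) :=
  {z | z ∈ nonnegV R T ∧ ∀ v, 0 ≤ fVeps Wm Wp C A ε v z}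

/-- `P₀(ε)`, the largest connected subset of `P(ε)` containing `0`. -/
noncomputable def P0Veps {Ω : Type*} [MeasureSpace Ω] {R T : ℕ}
    (Wm Wp : Ω → Fin R → Fin T → ℝ) (C : Ω → WithTop ℕ) (A : Ω → Fin T) (ε : ℝ) :
    Set ((Fin R × Fin T × Fin T) → ℝ) :=
  connectedComponentIn (PsetVeps Wm Wp C A ε) 0

/-- `z*(ε)`, defined by `(z*(ε))^{r,α,β} = sup_{z ∈ P₀(ε)} z^{r,α,β}`. -/
noncomputable def zStarVeps {Ω : Type*} [MeasureSpace Ω] {R T : ℕ}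
    (Wm Wp : Ω → Fin R → Fin T → ℝ) (C : Ω → WithTop ℕ) (A : Ω → Fin T) (ε : ℝ) :
    (Fin R × Fin T × Fin T) → ℝ :=
  fun v => sSup ((fun z => z v) '' P0Veps Wm Wp C A ε)


lemma poisProb_nonneg {q : ℝ} (hq : 0 ≤ q) (k : ℕ) : 0 ≤ poisProb q k := by
  unfold poisProb; positivity

lemma summable_norm_poisProb (q : ℝ) : Summable fun k => ‖poisProb q k‖ := by
  have h : ∀ k, ‖poisProb q k‖ = Real.exp (-q) * (|q| ^ k / (Nat.factorial k : ℝ)) := by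
    intro k
    rw [poisProb, Real.norm_eq_abs, abs_div, abs_mul, abs_of_pos (Real.exp_pos _), abs_pow,
      abs_of_nonneg (by positivity : (0:ℝ) ≤ (Nat.factorial k : ℝ)), mul_div_assoc]
  simpa [h] using (Real.summable_pow_div_factorial |q|).mul_left (Real.exp (-q))

lemma summable_poisProb (q : ℝ) : Summable fun k => poisProb q k :=
  (summable_norm_poisProb q).of_norm

lemma tsum_poisProb (q : ℝ) : ∑' k, poisProb q k = 1 := by
  have h : ∑' k : ℕ, q ^ k / (Nat.factorial k : ℝ) = Real.exp q := by
    rw [Real.exp_eq_exp_ℝ, NormedSpace.exp_eq_tsum_div]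
  calc ∑' k, poisProb q k = ∑' k, Real.exp (-q) * (q ^ k / (Nat.factorial k : ℝ)) := by
        simp [poisProb, mul_div_assoc]
    _ = Real.exp (-q) * Real.exp q := by rw [tsum_mul_left, h]
    _ = 1 := by rw [← Real.exp_add]; simp

lemma summable_norm_piProd {R : ℕ} (g : Fin R → ℕ → ℝ) (hg : ∀ s, Summable fun k => ‖g s k‖) :
    Summable fun k : Fin R → ℕ => ‖∏ s, g s (k s)‖ := by
  induction R with
  | zero => exact .of_finite
  | succ n ih =>
    have h2 := (hg 0).mul_norm (ih (fun s => g s.succ) (fun s => hg s.succ))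
    rw [← (Fin.consEquiv (fun _ : Fin (n + 1) => ℕ)).summable_iff]
    refine h2.congr fun x => ?_
    simp [Fin.consEquiv, Fin.prod_univ_succ, Function.comp]

lemma tsum_piProd {R : ℕ} (g : Fin R → ℕ → ℝ) (hg : ∀ s, Summable fun k => ‖g s k‖) :
    ∑' k : Fin R → ℕ, ∏ s, g s (k s) = ∏ s, ∑' k, g s k := by
  induction R with
  | zero =>
    rw [tsum_eq_single (fun i => i.elim0) (fun b hb => absurd (Subsingleton.elim b _) hb)]
    simp
  | succ n ih =>
    rw [← (Fin.consEquiv (fun _ : Fin (n + 1) => ℕ)).tsum_eq]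
    have : ∀ x : ℕ × (Fin n → ℕ),
        (∏ s, g s ((Fin.consEquiv (fun _ : Fin (n + 1) => ℕ)) x s)) =
          g 0 x.1 * ∏ s, g s.succ (x.2 s) := by
      intro x; simp [Fin.consEquiv, Fin.prod_univ_succ]
    rw [tsum_congr this, ← tsum_mul_tsum_of_summable_norm (hg 0)
      (summable_norm_piProd (fun s => g s.succ) (fun s => hg s.succ)),
      ih (fun s => g s.succ) (fun s => hg s.succ), Fin.prod_univ_succ]

section psi
open Classical
variable {R : ℕ} (q : Fin R → ℝ)

lemma summable_norm_prodPois : Summable fun k : Fin R → ℕ => ‖∏ s, poisProb (q s) (k s)‖ :=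
  summable_norm_piProd _ fun s => summable_norm_poisProb (q s)

lemma tsum_prodPois : ∑' k : Fin R → ℕ, ∏ s, poisProb (q s) (k s) = 1 := by
  rw [tsum_piProd _ fun s => summable_norm_poisProb (q s)]
  simp [tsum_poisProb]

lemma psiMulti_top : psiMulti q (⊤ : WithTop ℤ) = 0 := by
  unfold psiMulti
  have h : ∀ k : Fin R → ℕ,
      (if (⊤ : WithTop ℤ) ≤ ((((∑ s : Fin R, ((s : ℕ) + 1) * k s : ℕ) : ℕ) : ℤ) : WithTop ℤ) then
        ∏ s, poisProb (q s) (k s) else 0) = 0 := by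
    intro k; rw [if_neg]; rw [top_le_iff]; exact WithTop.coe_ne_top
  rw [tsum_congr h, tsum_zero]

lemma psiMulti_coe (m : ℤ) :
    psiMulti q (m : WithTop ℤ) =
      1 - ∑ k ∈ Fintype.piFinset (fun _ : Fin R => Finset.range m.toNat),
        (if ((∑ s : Fin R, ((s : ℕ) + 1) * k s : ℕ) : ℤ) < m then ∏ s, poisProb (q s) (k s)
          else 0) := by
  classical
  set F : (Fin R → ℕ) → ℝ := fun k => ∏ s, poisProb (q s) (k s) with hF
  set G : (Fin R → ℕ) → ℝ := fun k =>
    if ((∑ s : Fin R, ((s : ℕ) + 1) * k s : ℕ) : ℤ) < m then F k else 0 with hG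
  have hGsupp : ∀ k ∉ Fintype.piFinset (fun _ : Fin R => Finset.range m.toNat), G k = 0 := by
    intro k hk
    rw [Fintype.mem_piFinset] at hk
    push_neg at hk
    obtain ⟨s, hs⟩ := hk
    rw [Finset.mem_range, not_lt] at hs
    have h1 : (m.toNat : ℤ) ≤ ((∑ s : Fin R, ((s : ℕ) + 1) * k s : ℕ) : ℤ) := by
      have : m.toNat ≤ ∑ s : Fin R, ((s : ℕ) + 1) * k s := by
        calc m.toNat ≤ k s := hs
          _ ≤ ((s : ℕ) + 1) * k s := Nat.le_mul_of_pos_left _ (Nat.succ_pos _)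
          _ ≤ _ := Finset.single_le_sum (f := fun s : Fin R => ((s : ℕ) + 1) * k s)
              (fun i _ => Nat.zero_le _) (Finset.mem_univ s)
      exact_mod_cast this
    have : ¬ ((∑ s : Fin R, ((s : ℕ) + 1) * k s : ℕ) : ℤ) < m :=
      not_lt.2 (le_trans (Int.self_le_toNat m) h1)
    simp only [hG, if_neg this]
  have hGsum : Summable G := summable_of_ne_finset_zero hGsupp
  have hFsum : Summable F := (summable_norm_prodPois q).of_norm
  have hFG : ∀ k : Fin R → ℕ,
      (if (m : WithTop ℤ) ≤ ((((∑ s : Fin R, ((s : ℕ) + 1) * k s : ℕ) : ℕ) : ℤ) : WithTop ℤ) then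
        F k else 0) = F k - G k := by
    intro k
    by_cases h : ((∑ s : Fin R, ((s : ℕ) + 1) * k s : ℕ) : ℤ) < m
    · rw [if_neg (by exact_mod_cast not_le.2 h)]
      have hGk : G k = F k := if_pos h
      rw [hGk]; ring
    · rw [if_pos (by exact_mod_cast not_lt.1 h)]
      have hGk : G k = 0 := if_neg h
      rw [hGk]; ring
  unfold psiMulti
  rw [tsum_congr hFG, Summable.tsum_sub hFsum hGsum, tsum_eq_sum hGsupp]
  have : ∑' k, F k = 1 := tsum_prodPois q
  rw [this]

lemma psiMulti_nonneg (hq : ∀ s, 0 ≤ q s) (l : WithTop ℤ) : 0 ≤ psiMulti q l := by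
  refine tsum_nonneg fun k => ?_
  split
  · exact Finset.prod_nonneg fun s _ => poisProb_nonneg (hq s) _
  · exact le_refl 0

lemma psiMulti_le_one (hq : ∀ s, 0 ≤ q s) (l : WithTop ℤ) : psiMulti q l ≤ 1 := by
  have h1 : ∀ k : Fin R → ℕ,
      (if l ≤ ((((∑ s : Fin R, ((s : ℕ) + 1) * k s : ℕ) : ℕ) : ℤ) : WithTop ℤ) then
        ∏ s, poisProb (q s) (k s) else 0) ≤ ∏ s, poisProb (q s) (k s) := by
    intro k
    split
    · exact le_refl _
    · exact Finset.prod_nonneg fun s _ => poisProb_nonneg (hq s) _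
  have hs : Summable fun k : Fin R → ℕ =>
      (if l ≤ ((((∑ s : Fin R, ((s : ℕ) + 1) * k s : ℕ) : ℕ) : ℤ) : WithTop ℤ) then
        ∏ s, poisProb (q s) (k s) else 0) := by
    refine Summable.of_norm_bounded (summable_norm_prodPois q) fun k => ?_
    split
    · exact le_refl _
    · simp only [norm_zero]; positivity
  calc psiMulti q l ≤ ∑' k : Fin R → ℕ, ∏ s, poisProb (q s) (k s) :=
        Summable.tsum_le_tsum h1 hs ((summable_norm_prodPois q).of_norm)
    _ = 1 := tsum_prodPois q

lemma continuous_poisProb (k : ℕ) : Continuous fun q : ℝ => poisProb q k := by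
  unfold poisProb
  fun_prop

lemma continuous_psiMulti {R : ℕ} (l : WithTop ℤ) :
    Continuous fun q : Fin R → ℝ => psiMulti q l := by
  induction l with
  | top => simpa [psiMulti_top] using continuous_const
  | coe m =>
    simp only [psiMulti_coe]
    refine continuous_const.sub (continuous_finset_sum _ fun k _ => ?_)
    split
    · exact continuous_finset_prod _ fun s _ => (continuous_poisProb (k s)).comp (continuous_apply s)
    · exact continuous_const

end psi

noncomputable section main
set_option linter.unusedSectionVars false
set_option linter.unusedVariables false
open Classical

instance : MeasurableSpace (WithTop ℕ) := ⊤
instance : MeasurableSingletonClass (WithTop ℕ) := ⟨fun _ => MeasurableSpace.measurableSet_top⟩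

variable {Ω : Type*} [MeasureSpace Ω] [IsProbabilityMeasure (volume : Measure Ω)]
  {R T : ℕ} {Wm Wp : Ω → Fin R → Fin T → ℝ} {C : Ω → WithTop ℕ} {A : Ω → Fin T}

/-- The integral part of `fV`. -/
def IvInt (Wm Wp : Ω → Fin R → Fin T → ℝ) (C : Ω → WithTop ℕ) (A : Ω → Fin T)
    (v : Fin R × Fin T × Fin T) (z : Fin R × Fin T × Fin T → ℝ) : ℝ :=
  ∫ ω, if A ω = v.2.2 then
      Wp ω v.1 v.2.1 * psiMulti (fun s => ∑ γ, Wm ω s γ * z (s, v.2.2, γ)) (natCastTop (C ω))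
    else 0

lemma fV_eq (v : Fin R × Fin T × Fin T) (z : Fin R × Fin T × Fin T → ℝ) :
    fV Wm Wp C A v z = IvInt Wm Wp C A v z - z v := rfl

lemma fVeps_eq (ε : ℝ) (v : Fin R × Fin T × Fin T) (z : Fin R × Fin T × Fin T → ℝ) :
    fVeps Wm Wp C A ε v z =
      (IvInt Wm Wp C A v z - z v) + ε * (zetaV Wp A v - IvInt Wm Wp C A v z) := by
  unfold fVeps; rw [fV_eq]; ring

section meas
variable (hWm_nonneg : ∀ ω r α, 0 ≤ Wm ω r α) (hWp_nonneg : ∀ ω r α, 0 ≤ Wp ω r α)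
  (hWm_meas : ∀ r α, Measurable fun ω => Wm ω r α)
  (hWp_meas : ∀ r α, Measurable fun ω => Wp ω r α)
  (hA_meas : Measurable A) (hC_meas : ∀ l : WithTop ℕ, MeasurableSet {ω | C ω = l})
  (hWp_int : ∀ r α, Integrable fun ω => Wp ω r α)

include hWm_meas hWp_meas hA_meas hC_meas in
lemma measurable_integrand (v : Fin R × Fin T × Fin T) (z : Fin R × Fin T × Fin T → ℝ) :
    Measurable fun ω => if A ω = v.2.2 then
      Wp ω v.1 v.2.1 * psiMulti (fun s => ∑ γ, Wm ω s γ * z (s, v.2.2, γ)) (natCastTop (C ω))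
    else 0 := by
  have hC : Measurable C := measurable_to_countable' fun l => hC_meas l
  have hq : Measurable fun ω => (fun s => ∑ γ, Wm ω s γ * z (s, v.2.2, γ)) := by
    refine measurable_pi_lambda _ fun s => ?_
    exact Finset.measurable_sum _ fun γ _ => (hWm_meas s γ).mul_const _
  have hpsi : Measurable fun p : (Fin R → ℝ) × WithTop ℕ => psiMulti p.1 (natCastTop p.2) :=
    measurable_from_prod_countable_left fun l => (continuous_psiMulti (natCastTop l)).measurable
  have h2 : Measurable fun ω =>
      psiMulti (fun s => ∑ γ, Wm ω s γ * z (s, v.2.2, γ)) (natCastTop (C ω)) :=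
    hpsi.comp (hq.prodMk hC)
  refine Measurable.ite ?_ ((hWp_meas v.1 v.2.1).mul h2) measurable_const
  exact hA_meas (measurableSet_singleton v.2.2)

include hWm_nonneg hWp_nonneg in
lemma integrand_nonneg (v : Fin R × Fin T × Fin T) {z : Fin R × Fin T × Fin T → ℝ}
    (hz : z ∈ nonnegV R T) (ω : Ω) :
    0 ≤ if A ω = v.2.2 then
      Wp ω v.1 v.2.1 * psiMulti (fun s => ∑ γ, Wm ω s γ * z (s, v.2.2, γ)) (natCastTop (C ω))
    else 0 := by
  split
  · refine mul_nonneg (hWp_nonneg _ _ _) (psiMulti_nonneg _ (fun s => ?_) _)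
    exact Finset.sum_nonneg fun γ _ => mul_nonneg (hWm_nonneg _ _ _) (hz _)
  · exact le_refl 0

include hWm_nonneg hWp_nonneg in
lemma integrand_le (v : Fin R × Fin T × Fin T) {z : Fin R × Fin T × Fin T → ℝ}
    (hz : z ∈ nonnegV R T) (ω : Ω) :
    (if A ω = v.2.2 then
      Wp ω v.1 v.2.1 * psiMulti (fun s => ∑ γ, Wm ω s γ * z (s, v.2.2, γ)) (natCastTop (C ω))
    else 0) ≤ if A ω = v.2.2 then Wp ω v.1 v.2.1 else 0 := by
  split
  · refine mul_le_of_le_one_right (hWp_nonneg _ _ _) (psiMulti_le_one _ (fun s => ?_) _)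
    exact Finset.sum_nonneg fun γ _ => mul_nonneg (hWm_nonneg _ _ _) (hz _)
  · exact le_refl 0

include hWm_nonneg hWp_nonneg hWm_meas hWp_meas hA_meas hC_meas hWp_int in
lemma integrable_integrand (v : Fin R × Fin T × Fin T) {z : Fin R × Fin T × Fin T → ℝ}
    (hz : z ∈ nonnegV R T) :
    Integrable fun ω => if A ω = v.2.2 then
      Wp ω v.1 v.2.1 * psiMulti (fun s => ∑ γ, Wm ω s γ * z (s, v.2.2, γ)) (natCastTop (C ω))
    else 0 := by
  refine (hWp_int v.1 v.2.1).mono'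
    ((measurable_integrand hWm_meas hWp_meas hA_meas hC_meas v z).aestronglyMeasurable)
    (ae_of_all _ fun ω => ?_)
  rw [Real.norm_eq_abs, abs_of_nonneg (integrand_nonneg hWm_nonneg hWp_nonneg v hz ω)]
  refine le_trans (integrand_le hWm_nonneg hWp_nonneg v hz ω) ?_
  split
  · exact le_refl _
  · exact hWp_nonneg _ _ _

include hWp_nonneg hWp_meas hA_meas hWp_int in
lemma integrable_zeta_integrand (v : Fin R × Fin T × Fin T) :
    Integrable fun ω => if A ω = v.2.2 then Wp ω v.1 v.2.1 else 0 := by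
  refine (hWp_int v.1 v.2.1).mono'
    ((Measurable.ite (hA_meas (measurableSet_singleton v.2.2)) (hWp_meas v.1 v.2.1)
      measurable_const).aestronglyMeasurable) (ae_of_all _ fun ω => ?_)
  rw [Real.norm_eq_abs]
  split
  · rw [abs_of_nonneg (hWp_nonneg _ _ _)]
  · rw [abs_zero]; exact hWp_nonneg _ _ _

include hWm_nonneg hWp_nonneg hWm_meas hWp_meas hA_meas hC_meas hWp_int in
lemma IvInt_le_zeta (v : Fin R × Fin T × Fin T) {z : Fin R × Fin T × Fin T → ℝ}
    (hz : z ∈ nonnegV R T) : IvInt Wm Wp C A v z ≤ zetaV Wp A v := by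
  refine integral_mono
    (integrable_integrand hWm_nonneg hWp_nonneg hWm_meas hWp_meas hA_meas hC_meas hWp_int v hz)
    (integrable_zeta_integrand hWp_nonneg hWp_meas hA_meas hWp_int v)
    (fun ω => integrand_le hWm_nonneg hWp_nonneg v hz ω)

include hWm_nonneg hWp_nonneg in
lemma IvInt_nonneg (v : Fin R × Fin T × Fin T) {z : Fin R × Fin T × Fin T → ℝ}
    (hz : z ∈ nonnegV R T) : 0 ≤ IvInt Wm Wp C A v z :=
  integral_nonneg fun ω => integrand_nonneg hWm_nonneg hWp_nonneg v hz ω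

include hWp_nonneg in
lemma zetaV_nonneg (v : Fin R × Fin T × Fin T) : 0 ≤ zetaV Wp A v := by
  refine integral_nonneg fun ω => ?_
  simp only [Pi.zero_apply]
  split
  · exact hWp_nonneg _ _ _
  · exact le_refl 0

include hWm_nonneg hWp_nonneg hWm_meas hWp_meas hA_meas hC_meas hWp_int in
lemma continuousWithinAt_IvInt (v : Fin R × Fin T × Fin T) {z₀ : Fin R × Fin T × Fin T → ℝ}
    (hz₀ : z₀ ∈ nonnegV R T) :
    ContinuousWithinAt (fun z => IvInt Wm Wp C A v z) (nonnegV R T) z₀ := by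
  refine tendsto_integral_filter_of_dominated_convergence (fun ω => Wp ω v.1 v.2.1)
    (Eventually.of_forall fun z =>
      (measurable_integrand hWm_meas hWp_meas hA_meas hC_meas v z).aestronglyMeasurable)
    ?_ (hWp_int v.1 v.2.1) (ae_of_all _ fun ω => ?_)
  · filter_upwards [self_mem_nhdsWithin] with z hz
    refine ae_of_all _ fun ω => ?_
    rw [Real.norm_eq_abs, abs_of_nonneg (integrand_nonneg hWm_nonneg hWp_nonneg v hz ω)]
    refine le_trans (integrand_le hWm_nonneg hWp_nonneg v hz ω) ?_
    split
    · exact le_refl _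
    · exact hWp_nonneg _ _ _
  · have hcont : Continuous fun z : (Fin R × Fin T × Fin T) → ℝ =>
        (if A ω = v.2.2 then
          Wp ω v.1 v.2.1 * psiMulti (fun s => ∑ γ, Wm ω s γ * z (s, v.2.2, γ)) (natCastTop (C ω))
        else 0) := by
      by_cases hA : A ω = v.2.2
      · simp only [if_pos hA]
        refine continuous_const.mul ((continuous_psiMulti _).comp ?_)
        exact continuous_pi fun s => continuous_finset_sum _ fun γ _ =>
          continuous_const.mul (continuous_apply _)
      · simp only [if_neg hA]; exact continuous_const
    exact (hcont.tendsto z₀).mono_left nhdsWithin_le_nhds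

include hWm_nonneg hWp_nonneg hWm_meas hWp_meas hA_meas hC_meas hWp_int in
lemma continuousWithinAt_fVeps (ε : ℝ) (v : Fin R × Fin T × Fin T)
    {z₀ : Fin R × Fin T × Fin T → ℝ} (hz₀ : z₀ ∈ nonnegV R T) :
    ContinuousWithinAt (fun z => fVeps Wm Wp C A ε v z) (nonnegV R T) z₀ := by
  have h1 := continuousWithinAt_IvInt hWm_nonneg hWp_nonneg hWm_meas hWp_meas hA_meas hC_meas
    hWp_int v hz₀
  have heq : (fun z => fVeps Wm Wp C A ε v z) = fun z =>
      (IvInt Wm Wp C A v z - z v) + ε * (zetaV Wp A v - IvInt Wm Wp C A v z) := by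
    funext z; exact fVeps_eq ε v z
  rw [heq]
  exact ((h1.sub (continuous_apply v).continuousWithinAt).add
    ((continuousWithinAt_const.sub h1).const_mul ε))

end meas
end main

lemma isPreconnected_iInter_of_nested {X : Type*} [TopologicalSpace X] [T4Space X]
    {K : ℕ → Set X} (hcomp : ∀ n, IsCompact (K n)) (hconn : ∀ n, IsPreconnected (K n))
    (hanti : ∀ n, K (n + 1) ⊆ K n) : IsPreconnected (⋂ n, K n) := by
  have hmono : ∀ m n, m ≤ n → K n ⊆ K m := fun m n h =>
    (antitone_nat_of_succ_le hanti) h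
  intro u v hu hv hcover hne_u hne_v
  by_contra hempty
  rw [not_nonempty_iff_eq_empty] at hempty
  set Ki := ⋂ n, K n with hKi
  have hKcl : ∀ n, IsClosed (K n) := fun n => (hcomp n).isClosed
  have hKicl : IsClosed Ki := isClosed_iInter hKcl
  set Aset := Ki ∩ vᶜ with hA
  set Bset := Ki ∩ uᶜ with hB
  have hAc : IsClosed Aset := hKicl.inter hv.isClosed_compl
  have hBc : IsClosed Bset := hKicl.inter hu.isClosed_compl
  have hAne : Aset.Nonempty := by
    obtain ⟨x, hx1, hx2⟩ := hne_u
    refine ⟨x, hx1, fun hxv => ?_⟩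
    have : x ∈ Ki ∩ (u ∩ v) := ⟨hx1, hx2, hxv⟩
    rw [hempty] at this; exact this
  have hBne : Bset.Nonempty := by
    obtain ⟨x, hx1, hx2⟩ := hne_v
    refine ⟨x, hx1, fun hxu => ?_⟩
    have : x ∈ Ki ∩ (u ∩ v) := ⟨hx1, hxu, hx2⟩
    rw [hempty] at this; exact this
  have hdisj : Disjoint Aset Bset := by
    rw [Set.disjoint_left]
    rintro x ⟨hx1, hxv⟩ ⟨-, hxu⟩
    rcases hcover hx1 with h | h
    · exact hxu h
    · exact hxv h
  obtain ⟨U, V, hUo, hVo, hAU, hBV, hUV⟩ := normal_separation hAc hBc hdisj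
  set Cs : ℕ → Set X := fun n => K n ∩ (U ∪ V)ᶜ with hCs
  have hCcomp : ∀ n, IsCompact (Cs n) := fun n =>
    (hcomp n).inter_right (hUo.union hVo).isClosed_compl
  have hCcl : ∀ n, IsClosed (Cs n) := fun n => (hKcl n).inter (hUo.union hVo).isClosed_compl
  have hCanti : ∀ n, Cs (n + 1) ⊆ Cs n := fun n => Set.inter_subset_inter_left _ (hanti n)
  have hCne : ∀ n, (Cs n).Nonempty := by
    intro n
    by_contra h
    rw [not_nonempty_iff_eq_empty] at h
    have hKsub : K n ⊆ U ∪ V := by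
      intro x hx
      by_contra hx2
      have : x ∈ Cs n := ⟨hx, hx2⟩
      rw [h] at this; exact this
    have hKU : (K n ∩ U).Nonempty := by
      obtain ⟨x, hx⟩ := hAne
      exact ⟨x, (Set.iInter_subset K n) hx.1, hAU hx⟩
    have hKV : (K n ∩ V).Nonempty := by
      obtain ⟨x, hx⟩ := hBne
      exact ⟨x, (Set.iInter_subset K n) hx.1, hBV hx⟩
    obtain ⟨x, hxK, hxU, hxV⟩ := hconn n U V hUo hVo hKsub hKU hKV
    exact (Set.disjoint_left.1 hUV) hxU hxV
  obtain ⟨x, hx⟩ := IsCompact.nonempty_iInter_of_sequence_nonempty_isCompact_isClosed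
    Cs hCanti hCne (hCcomp 0) hCcl
  rw [Set.mem_iInter] at hx
  have hxKi : x ∈ Ki := Set.mem_iInter.2 fun n => (hx n).1
  have hxnUV : x ∉ U ∪ V := (hx 0).2
  have hxuv : x ∉ u ∩ v := fun h => by
    have : x ∈ Ki ∩ (u ∩ v) := ⟨hxKi, h⟩
    rw [hempty] at this; exact this
  rcases hcover hxKi with h | h
  · have hxA : x ∈ Aset := ⟨hxKi, fun hv' => hxuv ⟨h, hv'⟩⟩
    exact hxnUV (Or.inl (hAU hxA))
  · have hxB : x ∈ Bset := ⟨hxKi, fun hu' => hxuv ⟨hu', h⟩⟩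
    exact hxnUV (Or.inr (hBV hxB))

noncomputable section sets
set_option linter.unusedSectionVars false
open Classical
variable {Ω : Type*} [MeasureSpace Ω] [IsProbabilityMeasure (volume : Measure Ω)]
  {R T : ℕ} {Wm Wp : Ω → Fin R → Fin T → ℝ} {C : Ω → WithTop ℕ} {A : Ω → Fin T}
  (hWm_nonneg : ∀ ω r α, 0 ≤ Wm ω r α) (hWp_nonneg : ∀ ω r α, 0 ≤ Wp ω r α)
  (hWm_meas : ∀ r α, Measurable fun ω => Wm ω r α)
  (hWp_meas : ∀ r α, Measurable fun ω => Wp ω r α)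
  (hA_meas : Measurable A) (hC_meas : ∀ l : WithTop ℕ, MeasurableSet {ω | C ω = l})
  (hWp_int : ∀ r α, Integrable fun ω => Wp ω r α)

include hWm_nonneg hWp_nonneg hWm_meas hWp_meas hA_meas hC_meas hWp_int

lemma mem_Pset_le_zeta {ε : ℝ} (hε0 : 0 ≤ ε) (hε1 : ε < 1)
    {z : Fin R × Fin T × Fin T → ℝ} (hz : z ∈ PsetVeps Wm Wp C A ε)
    (v : Fin R × Fin T × Fin T) : z v ≤ zetaV Wp A v := by
  have h := hz.2 v
  rw [fVeps_eq] at h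
  have hIζ := IvInt_le_zeta hWm_nonneg hWp_nonneg hWm_meas hWp_meas hA_meas hC_meas hWp_int v hz.1
  nlinarith

lemma Pset_mono {ε₁ ε₂ : ℝ} (h : ε₁ ≤ ε₂) :
    PsetVeps Wm Wp C A ε₁ ⊆ PsetVeps Wm Wp C A ε₂ := by
  intro z hz
  refine ⟨hz.1, fun v => ?_⟩
  have h1 := hz.2 v
  rw [fVeps_eq] at h1 ⊢
  have hIζ := IvInt_le_zeta hWm_nonneg hWp_nonneg hWm_meas hWp_meas hA_meas hC_meas hWp_int v hz.1
  nlinarith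

lemma zero_mem_Pset {ε : ℝ} (hε0 : 0 ≤ ε) (hε1 : ε < 1) :
    (0 : Fin R × Fin T × Fin T → ℝ) ∈ PsetVeps Wm Wp C A ε := by
  have h0 : (0 : Fin R × Fin T × Fin T → ℝ) ∈ nonnegV R T := fun v => le_refl 0
  refine ⟨h0, fun v => ?_⟩
  rw [fVeps_eq]
  have hI0 := IvInt_nonneg (C := C) (A := A) hWm_nonneg hWp_nonneg v h0
  have hIζ := IvInt_le_zeta hWm_nonneg hWp_nonneg hWm_meas hWp_meas hA_meas hC_meas hWp_int v h0
  simp only [Pi.zero_apply]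
  nlinarith

lemma isClosed_Pset (ε : ℝ) : IsClosed (PsetVeps Wm Wp C A ε) := by
  refine IsSeqClosed.isClosed (fun x p hx hxp => ?_)
  have hev : ∀ v : Fin R × Fin T × Fin T,
      Tendsto (fun n => x n v) atTop (𝓝 (p v)) := fun v =>
    ((continuous_apply v).continuousAt.tendsto).comp hxp
  have hpnn : p ∈ nonnegV R T := fun v => ge_of_tendsto' (hev v) (fun n => (hx n).1 v)
  refine ⟨hpnn, fun v => ?_⟩
  have hc := continuousWithinAt_fVeps hWm_nonneg hWp_nonneg hWm_meas hWp_meas hA_meas hC_meas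
    hWp_int ε v hpnn
  have hxp' : Tendsto x atTop (𝓝[nonnegV R T] p) :=
    tendsto_nhdsWithin_iff.2 ⟨hxp, Eventually.of_forall fun n => (hx n).1⟩
  exact ge_of_tendsto' (hc.tendsto.comp hxp') fun n => (hx n).2 v

lemma Pset_subset_box {ε : ℝ} (hε0 : 0 ≤ ε) (hε1 : ε < 1) :
    PsetVeps Wm Wp C A ε ⊆ Icc (0 : Fin R × Fin T × Fin T → ℝ) (zetaV Wp A) := by
  intro z hz
  rw [Set.mem_Icc]
  exact ⟨fun v => hz.1 v, fun v =>
    mem_Pset_le_zeta hWm_nonneg hWp_nonneg hWm_meas hWp_meas hA_meas hC_meas hWp_int hε0 hε1 hz v⟩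

lemma zero_mem_P0 {ε : ℝ} (hε0 : 0 ≤ ε) (hε1 : ε < 1) :
    (0 : Fin R × Fin T × Fin T → ℝ) ∈ P0Veps Wm Wp C A ε :=
  mem_connectedComponentIn
    (zero_mem_Pset hWm_nonneg hWp_nonneg hWm_meas hWp_meas hA_meas hC_meas hWp_int hε0 hε1)

lemma isClosed_P0 {ε : ℝ} (hε0 : 0 ≤ ε) (hε1 : ε < 1) : IsClosed (P0Veps Wm Wp C A ε) := by
  have hPc := isClosed_Pset hWm_nonneg hWp_nonneg hWm_meas hWp_meas hA_meas hC_meas hWp_int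
    (ε := ε)
  refine isClosed_of_closure_subset ?_
  refine (isPreconnected_connectedComponentIn.closure).subset_connectedComponentIn ?_ ?_
  · exact subset_closure
      (zero_mem_P0 hWm_nonneg hWp_nonneg hWm_meas hWp_meas hA_meas hC_meas hWp_int hε0 hε1)
  · exact closure_minimal (connectedComponentIn_subset _ _) hPc

lemma isCompact_P0 {ε : ℝ} (hε0 : 0 ≤ ε) (hε1 : ε < 1) :
    IsCompact (P0Veps Wm Wp C A ε) := by
  exact IsCompact.of_isClosed_subset isCompact_Icc
    (isClosed_P0 hWm_nonneg hWp_nonneg hWm_meas hWp_meas hA_meas hC_meas hWp_int hε0 hε1)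
    ((connectedComponentIn_subset _ _).trans
      (Pset_subset_box hWm_nonneg hWp_nonneg hWm_meas hWp_meas hA_meas hC_meas hWp_int hε0 hε1))

lemma P0_mono {ε₁ ε₂ : ℝ} (h : ε₁ ≤ ε₂) :
    P0Veps Wm Wp C A ε₁ ⊆ P0Veps Wm Wp C A ε₂ :=
  connectedComponentIn_mono _
    (Pset_mono hWm_nonneg hWp_nonneg hWm_meas hWp_meas hA_meas hC_meas hWp_int h)

lemma zStar_mono {ε₁ ε₂ : ℝ} (hε₁0 : 0 ≤ ε₁) (h : ε₁ ≤ ε₂) (hε₂1 : ε₂ < 1)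
    (v : Fin R × Fin T × Fin T) :
    zStarVeps Wm Wp C A ε₁ v ≤ zStarVeps Wm Wp C A ε₂ v := by
  have hsub : ((fun z : Fin R × Fin T × Fin T → ℝ => z v) '' P0Veps Wm Wp C A ε₁) ⊆
      ((fun z : Fin R × Fin T × Fin T → ℝ => z v) '' P0Veps Wm Wp C A ε₂) :=
    Set.image_mono (P0_mono hWm_nonneg hWp_nonneg hWm_meas hWp_meas hA_meas hC_meas hWp_int h)
  refine csSup_le_csSup ?_ ?_ hsub
  · refine ((isCompact_P0 hWm_nonneg hWp_nonneg hWm_meas hWp_meas hA_meas hC_meas hWp_int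
      (le_trans hε₁0 h) hε₂1).image (continuous_apply v)).bddAbove
  · exact ⟨_, Set.mem_image_of_mem _ (zero_mem_P0 hWm_nonneg hWp_nonneg hWm_meas hWp_meas
      hA_meas hC_meas hWp_int hε₁0 (lt_of_le_of_lt h hε₂1))⟩
end sets

noncomputable section mainlemmas
set_option linter.unusedSectionVars false
set_option maxHeartbeats 1000000
open Classical
variable {Ω : Type*} [MeasureSpace Ω] [IsProbabilityMeasure (volume : Measure Ω)]
  {R T : ℕ} {Wm Wp : Ω → Fin R → Fin T → ℝ} {C : Ω → WithTop ℕ} {A : Ω → Fin T}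
  (hWm_nonneg : ∀ ω r α, 0 ≤ Wm ω r α) (hWp_nonneg : ∀ ω r α, 0 ≤ Wp ω r α)
  (hWm_meas : ∀ r α, Measurable fun ω => Wm ω r α)
  (hWp_meas : ∀ r α, Measurable fun ω => Wp ω r α)
  (hA_meas : Measurable A) (hC_meas : ∀ l : WithTop ℕ, MeasurableSet {ω | C ω = l})
  (hWp_int : ∀ r α, Integrable fun ω => Wp ω r α)

include hWm_nonneg hWp_nonneg hWm_meas hWp_meas hA_meas hC_meas hWp_int

lemma zStar_right_cts {ε : ℝ} (hε0 : 0 ≤ ε) (hε1 : ε < 1) (v : Fin R × Fin T × Fin T) :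
    ContinuousWithinAt (fun δ => zStarVeps Wm Wp C A δ v) (Ici ε) ε := by
  have hP0M : ∀ {a b : ℝ}, a ≤ b → P0Veps Wm Wp C A a ⊆ P0Veps Wm Wp C A b := fun h =>
    P0_mono hWm_nonneg hWp_nonneg hWm_meas hWp_meas hA_meas hC_meas hWp_int h
  have hcompact : ∀ {a : ℝ}, 0 ≤ a → a < 1 → IsCompact (P0Veps Wm Wp C A a) := fun h1 h2 =>
    isCompact_P0 hWm_nonneg hWp_nonneg hWm_meas hWp_meas hA_meas hC_meas hWp_int h1 h2
  have hclosed : ∀ {a : ℝ}, 0 ≤ a → a < 1 → IsClosed (P0Veps Wm Wp C A a) := fun h1 h2 =>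
    isClosed_P0 hWm_nonneg hWp_nonneg hWm_meas hWp_meas hA_meas hC_meas hWp_int h1 h2
  have hzmem0 : ∀ {a : ℝ}, 0 ≤ a → a < 1 → (0 : Fin R × Fin T × Fin T → ℝ) ∈
      P0Veps Wm Wp C A a := fun h1 h2 =>
    zero_mem_P0 hWm_nonneg hWp_nonneg hWm_meas hWp_meas hA_meas hC_meas hWp_int h1 h2
  have hmono : ∀ {a b : ℝ}, 0 ≤ a → a ≤ b → b < 1 → ∀ w,
      zStarVeps Wm Wp C A a w ≤ zStarVeps Wm Wp C A b w := fun h1 h2 h3 w =>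
    zStar_mono hWm_nonneg hWp_nonneg hWm_meas hWp_meas hA_meas hC_meas hWp_int h1 h2 h3 w
  rw [Metric.continuousWithinAt_iff]
  intro η hη
  have key : ∃ δ₀, ε < δ₀ ∧ δ₀ < 1 ∧
      zStarVeps Wm Wp C A δ₀ v < zStarVeps Wm Wp C A ε v + η := by
    by_contra hcon
    push_neg at hcon
    set δn : ℕ → ℝ := fun n => ε + (1 - ε) / (n + 2) with hδn
    have hδgt : ∀ n, ε < δn n := by
      intro n
      have h : 0 < (1 - ε) / ((n : ℝ) + 2) := div_pos (by linarith) (by positivity)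
      simp only [hδn]; linarith
    have hδlt : ∀ n, δn n < 1 := by
      intro n
      have h : (1 - ε) / ((n : ℝ) + 2) < 1 - ε := by
        apply div_lt_self (by linarith)
        have : (0:ℝ) ≤ (n : ℝ) := Nat.cast_nonneg n
        linarith
      simp only [hδn]; linarith
    have hδ0 : ∀ n, 0 ≤ δn n := fun n => le_trans hε0 (hδgt n).le
    have hδanti : ∀ m n, m ≤ n → δn n ≤ δn m := by
      intro m n h
      have h1 : (1 - ε) / ((n : ℝ) + 2) ≤ (1 - ε) / ((m : ℝ) + 2) := by
        apply div_le_div_of_nonneg_left (by linarith) (by positivity)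
        have hc := (Nat.cast_le (α := ℝ)).2 h
        linarith
      simp only [hδn]; linarith
    have hδtend : Tendsto δn atTop (𝓝 ε) := by
      have h1 : Tendsto (fun n : ℕ => (1 - ε) / ((n : ℝ) + 2)) atTop (𝓝 0) := by
        apply Tendsto.div_atTop tendsto_const_nhds
        exact tendsto_atTop_add_const_right atTop 2 tendsto_natCast_atTop_atTop
      have h2 : Tendsto (fun n : ℕ => ε + (1 - ε) / ((n : ℝ) + 2)) atTop (𝓝 (ε + 0)) :=
        tendsto_const_nhds.add h1
      simpa [hδn] using h2
    have hattain : ∀ n, ∃ z ∈ P0Veps Wm Wp C A (δn n), z v = zStarVeps Wm Wp C A (δn n) v := by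
      intro n
      have himg : IsCompact ((fun z : Fin R × Fin T × Fin T → ℝ => z v) ''
          P0Veps Wm Wp C A (δn n)) := (hcompact (hδ0 n) (hδlt n)).image (continuous_apply v)
      have h2 := himg.sSup_mem (Set.Nonempty.image _ ⟨0, hzmem0 (hδ0 n) (hδlt n)⟩)
      obtain ⟨z, hz, hzv⟩ := h2
      exact ⟨z, hz, hzv⟩
    choose zseq hzmem hzval using hattain
    obtain ⟨zbar, hzbar_mem, φ, hφ, hzbar_tend⟩ := (hcompact (hδ0 0) (hδlt 0)).tendsto_subseq
      (fun n => hP0M (hδanti 0 n (Nat.zero_le n)) (hzmem n))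
    have hzbar_in : ∀ m, zbar ∈ P0Veps Wm Wp C A (δn m) := by
      intro m
      refine (hclosed (hδ0 m) (hδlt m)).mem_of_tendsto hzbar_tend ?_
      filter_upwards [eventually_ge_atTop m] with k hk
      exact hP0M (hδanti m (φ k) (le_trans hk (hφ.le_apply))) (hzmem (φ k))
    have hKP : (⋂ m, P0Veps Wm Wp C A (δn m)) ⊆ PsetVeps Wm Wp C A ε := by
      intro z hz
      rw [Set.mem_iInter] at hz
      have hznn : z ∈ nonnegV R T := (connectedComponentIn_subset _ _ (hz 0)).1
      refine ⟨hznn, fun w => ?_⟩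
      have hf : ∀ m, 0 ≤ fVeps Wm Wp C A (δn m) w z := fun m =>
        (connectedComponentIn_subset _ _ (hz m)).2 w
      have hc : Continuous fun δ => fVeps Wm Wp C A δ w z := by
        have heq : (fun δ => fVeps Wm Wp C A δ w z) = fun δ =>
            (IvInt Wm Wp C A w z - z w) + δ * (zetaV Wp A w - IvInt Wm Wp C A w z) := by
          funext δ; exact fVeps_eq δ w z
        rw [heq]
        exact continuous_const.add (continuous_id.mul continuous_const)
      exact ge_of_tendsto' ((hc.tendsto ε).comp hδtend) hf
    have hKconn : IsPreconnected (⋂ m, P0Veps Wm Wp C A (δn m)) :=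
      isPreconnected_iInter_of_nested (fun n => hcompact (hδ0 n) (hδlt n))
        (fun n => isPreconnected_connectedComponentIn)
        (fun n => hP0M (hδanti n (n + 1) (Nat.le_succ n)))
    have hK0 : (0 : Fin R × Fin T × Fin T → ℝ) ∈ ⋂ m, P0Veps Wm Wp C A (δn m) :=
      Set.mem_iInter.2 fun m => hzmem0 (hδ0 m) (hδlt m)
    have hzbarP0 : zbar ∈ P0Veps Wm Wp C A ε :=
      (hKconn.subset_connectedComponentIn hK0 hKP) (Set.mem_iInter.2 hzbar_in)
    have h1 : zbar v ≤ zStarVeps Wm Wp C A ε v := by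
      refine le_csSup ?_ (Set.mem_image_of_mem _ hzbarP0)
      exact ((hcompact hε0 hε1).image (continuous_apply v)).bddAbove
    have h2 : zStarVeps Wm Wp C A ε v + η ≤ zbar v := by
      have htt : Tendsto (fun k => (zseq (φ k)) v) atTop (𝓝 (zbar v)) :=
        ((continuous_apply v).continuousAt.tendsto).comp hzbar_tend
      refine ge_of_tendsto' htt fun k => ?_
      rw [hzval (φ k)]
      exact hcon _ (hδgt (φ k)) (hδlt (φ k))
    linarith
  obtain ⟨δ₀, hδ₀1, hδ₀2, hδ₀3⟩ := key
  refine ⟨δ₀ - ε, by linarith, fun {x} hx hdist => ?_⟩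
  rw [Real.dist_eq] at hdist ⊢
  have hxε : ε ≤ x := hx
  have hxlt : x < δ₀ := by
    rw [abs_of_nonneg (by linarith)] at hdist; linarith
  have hm1 : zStarVeps Wm Wp C A ε v ≤ zStarVeps Wm Wp C A x v :=
    hmono hε0 hxε (lt_trans hxlt hδ₀2) v
  have hm2 : zStarVeps Wm Wp C A x v ≤ zStarVeps Wm Wp C A δ₀ v :=
    hmono (hε0.trans hxε) hxlt.le hδ₀2 v
  rw [abs_of_nonneg (by linarith)]
  linarith

end mainlemmas

set_option maxHeartbeats 1000000 in
/-- `ε ↦ z*(ε)` is componentwise non-decreasing and right-continuous on `[0,1)`; consequently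
its derivative exists for Lebesgue-a.e. `ε` and `z*(ε) − z*(0) ≥ ∫₀^ε (z*)'(ξ) dξ`
componentwise. -/
theorem stmt_7
    {Ω : Type*} [MeasureSpace Ω] [IsProbabilityMeasure (volume : Measure Ω)]
    {R T : ℕ} (hR : 0 < R) (hT : 0 < T)
    (Wm Wp : Ω → Fin R → Fin T → ℝ) (S : Ω → ℝ) (C : Ω → WithTop ℕ) (A : Ω → Fin T)
    (hWm_nonneg : ∀ ω r α, 0 ≤ Wm ω r α) (hWp_nonneg : ∀ ω r α, 0 ≤ Wp ω r α)
    (hS_nonneg : ∀ ω, 0 ≤ S ω)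
    (hWm_meas : ∀ r α, Measurable fun ω => Wm ω r α)
    (hWp_meas : ∀ r α, Measurable fun ω => Wp ω r α)
    (hS_meas : Measurable S) (hA_meas : Measurable A)
    (hC_meas : ∀ l : WithTop ℕ, MeasurableSet {ω | C ω = l})
    (hWm_int : ∀ r α, Integrable fun ω => Wm ω r α)
    (hWp_int : ∀ r α, Integrable fun ω => Wp ω r α)
    (hS_int : Integrable S)
    (hζ : ∀ v : Fin R × Fin T × Fin T, 0 < zetaV Wp A v) :
    (∀ ε₁ ∈ Set.Ico (0:ℝ) 1, ∀ ε₂ ∈ Set.Ico (0:ℝ) 1, ε₁ ≤ ε₂ →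
      ∀ v, zStarVeps Wm Wp C A ε₁ v ≤ zStarVeps Wm Wp C A ε₂ v) ∧
    (∀ ε ∈ Set.Ico (0:ℝ) 1, ∀ v,
      ContinuousWithinAt (fun δ => zStarVeps Wm Wp C A δ v) (Set.Ici ε) ε) ∧
    (∀ᵐ ε ∂((volume : Measure ℝ).restrict (Set.Ico (0:ℝ) 1)), ∀ v,
      DifferentiableWithinAt ℝ (fun δ => zStarVeps Wm Wp C A δ v) (Set.Ico (0:ℝ) 1) ε) ∧
    (∀ ε ∈ Set.Ico (0:ℝ) 1, ∀ v,
      ∫ ξ in (0:ℝ)..ε, derivWithin (fun δ => zStarVeps Wm Wp C A δ v) (Set.Ico (0:ℝ) 1) ξ ≤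
        zStarVeps Wm Wp C A ε v - zStarVeps Wm Wp C A 0 v) := by
  have hmonoIco : ∀ v, MonotoneOn (fun δ => zStarVeps Wm Wp C A δ v) (Set.Ico (0:ℝ) 1) := by
    intro v a ha b hb hab
    exact zStar_mono hWm_nonneg hWp_nonneg hWm_meas hWp_meas hA_meas hC_meas hWp_int
      ha.1 hab hb.2 v
  have hrc : ∀ ε ∈ Set.Ico (0:ℝ) 1, ∀ v,
      ContinuousWithinAt (fun δ => zStarVeps Wm Wp C A δ v) (Set.Ici ε) ε := fun ε hε v =>
    zStar_right_cts hWm_nonneg hWp_nonneg hWm_meas hWp_meas hA_meas hC_meas hWp_int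
      hε.1 hε.2 v
  refine ⟨fun ε₁ h₁ ε₂ h₂ h v => hmonoIco v h₁ h₂ h, hrc, ?_, ?_⟩
  · rw [ae_all_iff]
    intro v
    exact (hmonoIco v).ae_differentiableWithinAt measurableSet_Ico
  · intro ε hε v
    set F : ℝ → ℝ := fun δ => zStarVeps Wm Wp C A δ v with hF
    set c : ℝ := (ε + 1) / 2 with hc
    have hεc : ε < c := by rw [hc]; linarith [hε.2]
    have hc1 : c < 1 := by rw [hc]; linarith [hε.2]
    have hc0 : 0 ≤ c := by rw [hc]; linarith [hε.1]
    have hclamp_mem : ∀ y : ℝ, max 0 (min y c) ∈ Set.Ico (0:ℝ) 1 :=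
      fun y => ⟨le_max_left _ _, lt_of_le_of_lt (max_le hc0 (min_le_right y c)) hc1⟩
    have hclamp_id : ∀ y : ℝ, 0 ≤ y → y ≤ c → max 0 (min y c) = y := fun y h1 h2 => by
      rw [min_eq_left h2, max_eq_right h1]
    set g : ℝ → ℝ := fun x => F (max 0 (min x c)) with hg
    have hg_mono : Monotone g := by
      intro a b hab
      exact hmonoIco v (hclamp_mem a) (hclamp_mem b)
        (max_le_max (le_refl 0) (min_le_min hab (le_refl c)))
    have hg_rc : ∀ x, ContinuousWithinAt g (Set.Ici x) x := by
      intro x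
      rcases lt_or_ge x 0 with hx | hx
      · refine ContinuousWithinAt.congr_of_eventuallyEq
          (continuousWithinAt_const : ContinuousWithinAt (fun _ : ℝ => F 0) (Set.Ici x) x) ?_ ?_
        · filter_upwards [mem_nhdsWithin_of_mem_nhds (Iio_mem_nhds hx)] with y hy
          rw [hg]
          simp only
          rw [min_eq_left (le_trans (le_of_lt hy) hc0), max_eq_left (le_of_lt hy)]
        · rw [hg]; simp only
          rw [min_eq_left (le_trans hx.le hc0), max_eq_left hx.le]
      rcases lt_or_ge x c with hxc | hxc
      · have hFc : ContinuousWithinAt F (Set.Ici x) x := hrc x ⟨hx, lt_trans hxc hc1⟩ v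
        have hclamp_cont : ContinuousWithinAt (fun y => max 0 (min y c)) (Set.Ici x) x :=
          (continuous_const.max (continuous_id.min continuous_const)).continuousWithinAt
        have hmap : Set.MapsTo (fun y => max 0 (min y c)) (Set.Ici x) (Set.Ici x) := by
          intro y hy
          simp only [Set.mem_Ici] at hy ⊢
          calc x = max 0 (min x c) := (hclamp_id x hx hxc.le).symm
            _ ≤ max 0 (min y c) := max_le_max (le_refl 0) (min_le_min hy (le_refl c))
        have hFc'' : ContinuousWithinAt F (Set.Ici x) ((fun y => max 0 (min y c)) x) := by
          simp only
          rw [hclamp_id x hx hxc.le]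
          exact hFc
        exact ContinuousWithinAt.comp (g := F) (f := fun y => max 0 (min y c)) (t := Set.Ici x)
          hFc'' hclamp_cont hmap
      · refine ContinuousWithinAt.congr_of_eventuallyEq
          (continuousWithinAt_const : ContinuousWithinAt (fun _ : ℝ => F c) (Set.Ici x) x) ?_ ?_
        · filter_upwards [self_mem_nhdsWithin] with y hy
          rw [hg]; simp only
          rw [min_eq_right (le_trans hxc (Set.mem_Ici.1 hy)), max_eq_right hc0]
        · rw [hg]; simp only
          rw [min_eq_right hxc, max_eq_right hc0]
    set Sf : StieltjesFunction ℝ := ⟨g, hg_mono, hg_rc⟩ with hSf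
    have hae := Sf.ae_hasDerivAt
    have haeq : ∀ᵐ x ∂((volume : Measure ℝ).restrict (Set.Ioc 0 ε)),
        derivWithin F (Set.Ico (0:ℝ) 1) x =
          (Measure.rnDeriv Sf.measure volume x).toReal := by
      filter_upwards [ae_restrict_of_ae hae, ae_restrict_mem measurableSet_Ioc] with x hx hmem
      have hx01 : x ∈ Set.Ico (0:ℝ) 1 :=
        ⟨hmem.1.le, lt_of_le_of_lt hmem.2 (lt_trans hεc hc1)⟩
      have hFg : F =ᶠ[nhds x] g := by
        filter_upwards [Ioo_mem_nhds hmem.1 (lt_of_le_of_lt hmem.2 hεc)] with y hy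
        rw [hg]; simp only
        rw [hclamp_id y hy.1.le hy.2.le]
      have hF' : HasDerivAt F ((Measure.rnDeriv Sf.measure volume x).toReal) x :=
        hx.congr_of_eventuallyEq hFg
      exact (hF'.hasDerivWithinAt (s := Set.Ico (0:ℝ) 1)).derivWithin
        (uniqueDiffOn_Ico 0 1 x hx01)
    have hgε : g ε = F ε := by
      rw [hg]; simp only; rw [hclamp_id ε hε.1 hεc.le]
    have hg0 : g 0 = F 0 := by
      rw [hg]; simp only; rw [hclamp_id 0 (le_refl 0) hc0]
    calc ∫ ξ in (0:ℝ)..ε, derivWithin F (Set.Ico (0:ℝ) 1) ξ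
        = ∫ ξ in Set.Ioc 0 ε, derivWithin F (Set.Ico (0:ℝ) 1) ξ :=
          intervalIntegral.integral_of_le hε.1
      _ = ∫ ξ in Set.Ioc 0 ε, (Measure.rnDeriv Sf.measure volume ξ).toReal :=
          integral_congr_ae haeq
      _ ≤ (Sf.measure (Set.Ioc 0 ε)).toReal := by
          refine Measure.setIntegral_toReal_rnDeriv_le ?_
          rw [Sf.measure_Ioc]
          exact ENNReal.ofReal_ne_top
      _ = F ε - F 0 := by
          rw [Sf.measure_Ioc, ENNReal.toReal_ofReal]
          · show g ε - g 0 = F ε - F 0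
            rw [hgε, hg0]
          · show 0 ≤ g ε - g 0
            exact sub_nonneg.2 (hg_mono hε.1)
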